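/- Let X be a compact Hausdorff space. The extreme points of the convex set of Radon Borel probability measures on X are exactly the Dirac measures δ_x for x ∈ X: every Dirac measure is an extreme point, and every extreme point is a Dirac measure. -/

import Mathlib

open MeasureTheory NNReal ENNReal

lemma aux_eq_dirac_of_singleton {X : Type*} [MeasurableSpace X] [MeasurableSingletonClass X]
    (ν : Measure X) [IsProbabilityMeasure ν] {x : X} (h : ν {x} = 1) :
    ν = Measure.dirac x := by
  have hc : ν {x}ᶜ = 0 := (prob_compl_eq_zero_iff (measurableSet_singleton x)).mpr h
  ext s hs
  rw [Measure.dirac_apply' _ hs]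
  by_cases hx : x ∈ s
  · have h1 : ν {x} ≤ ν s := measure_mono (Set.singleton_subset_iff.mpr hx)
    have h2 : ν s ≤ 1 := prob_le_one
    simp [hx, le_antisymm h2 (h ▸ h1)]
  · have : ν s ≤ ν {x}ᶜ := measure_mono (fun y hy => by
      simp only [Set.mem_compl_iff, Set.mem_singleton_iff]
      rintro rfl; exact hx hy)
    simp [hx, le_antisymm (hc ▸ this) zero_le]

lemma aux_dirac_innerRegular {X : Type*} [TopologicalSpace X] [MeasurableSpace X]
    [BorelSpace X] (x : X) : (Measure.dirac x).InnerRegular := by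
  constructor
  intro U hU r hr
  by_cases hx : x ∈ U
  · exact ⟨{x}, Set.singleton_subset_iff.mpr hx, isCompact_singleton, by
      rwa [Measure.dirac_apply_of_mem (Set.mem_singleton x),
        ← Measure.dirac_apply_of_mem hx]⟩
  · rw [Measure.dirac_apply' _ hU, Set.indicator_of_notMem hx] at hr
    exact absurd hr (by simp)

/-- The extreme points of the convex set of Radon (inner regular) Borel probability
measures on a compact Hausdorff space `X` are exactly the Dirac measures `δ_x`, `x ∈ X`:
a member `μ` of this set is extreme (i.e. whenever `μ = t • ν₁ + (1 - t) • ν₂` with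
`ν₁, ν₂` in the set and `0 < t < 1`, necessarily `ν₁ = ν₂`) iff `μ = δ_x` for some `x`. -/
theorem stmt_14 {X : Type*} [TopologicalSpace X] [CompactSpace X] [T2Space X]
    [MeasurableSpace X] [BorelSpace X] (μ : Measure X) :
    ((IsProbabilityMeasure μ ∧ μ.InnerRegular) ∧
      ∀ ν₁ ν₂ : Measure X,
        (IsProbabilityMeasure ν₁ ∧ ν₁.InnerRegular) →
        (IsProbabilityMeasure ν₂ ∧ ν₂.InnerRegular) →
        ∀ t : ℝ≥0, 0 < t → t < 1 → μ = t • ν₁ + (1 - t) • ν₂ → ν₁ = ν₂) ↔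
    ∃ x : X, μ = Measure.dirac x := by
  constructor
  · rintro ⟨⟨hprob, hreg⟩, hext⟩
    by_cases hzo : ∀ s : Set X, MeasurableSet s → μ s = 0 ∨ μ s = 1
    · -- zero-one case: μ is a Dirac measure
      set S : Set X := {x | ∀ U : Set X, IsOpen U → x ∈ U → μ U ≠ 0} with hS
      have hSc_open : IsOpen Sᶜ := by
        rw [isOpen_iff_forall_mem_open]
        intro x hx
        simp only [hS, Set.mem_compl_iff, Set.mem_setOf_eq, not_forall] at hx
        obtain ⟨U, hUo, hxU, hU0⟩ := hx
        simp only [not_ne_iff] at hU0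
        refine ⟨U, fun y hy => ?_, hUo, hxU⟩
        simp only [Set.mem_compl_iff, hS, Set.mem_setOf_eq, not_forall]
        exact ⟨U, hUo, hy, by simp [hU0]⟩
      -- every compact set inside Sᶜ is null
      have hnull : ∀ K : Set X, IsCompact K → K ⊆ Sᶜ → μ K = 0 := by
        intro K hK hKS
        have hcover : ∀ x ∈ K, ∃ U : Set X, IsOpen U ∧ x ∈ U ∧ μ U = 0 := by
          intro x hx
          have := hKS hx
          simp only [Set.mem_compl_iff, hS, Set.mem_setOf_eq, not_forall] at this
          obtain ⟨U, h1, h2, h3⟩ := this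
          simp only [not_ne_iff] at h3
          exact ⟨U, h1, h2, h3⟩
        choose! U hUo hxU hU0 using hcover
        obtain ⟨t, ht⟩ := hK.elim_finite_subcover_image (fun x hx => hUo x hx)
          (fun x hx => Set.mem_biUnion hx (hxU x hx))
        obtain ⟨hts, htf, htc⟩ := ht
        refine le_antisymm (le_trans (measure_mono htc) (le_of_eq ?_)) zero_le
        exact (measure_biUnion_null_iff htf.countable).mpr (fun x hx => hU0 x (hts hx))
      have hScnull : μ Sᶜ = 0 := by
        by_contra h
        obtain ⟨K, hKS, hKc, hK0⟩ := hreg.innerRegular hSc_open.measurableSet 0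
          (pos_iff_ne_zero.mpr h)
        exact absurd (hnull K hKc hKS) (pos_iff_ne_zero.mp hK0)
      have hSne : S.Nonempty := by
        by_contra h
        rw [Set.not_nonempty_iff_eq_empty] at h
        have : μ Set.univ = 0 := by
          rw [← Set.compl_empty, ← h]; exact hScnull
        simp [measure_univ] at this
      obtain ⟨x, hx⟩ := hSne
      have hx1 : μ {x} = 1 := by
        rcases hzo {x} (measurableSet_singleton x) with h0 | h1
        · exfalso
          have hco : μ {x}ᶜ = 1 := by
            rw [prob_compl_eq_one_iff (measurableSet_singleton x)]
            exact h0
          obtain ⟨K, hKsub, hKc, hK0⟩ := hreg.innerRegular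
            (isOpen_compl_singleton.measurableSet) 0 (by rw [hco]; exact one_pos)
          have hK1 : μ K = 1 := by
            rcases hzo K hKc.measurableSet with h | h
            · exact absurd h (pos_iff_ne_zero.mp hK0)
            · exact h
          have hKcnull : μ Kᶜ = 0 := (prob_compl_eq_zero_iff hKc.measurableSet).mpr hK1
          have hxK : x ∈ Kᶜ := fun hmem => (hKsub hmem) rfl
          exact hx Kᶜ hKc.isClosed.isOpen_compl hxK hKcnull
        · exact h1
      exact ⟨x, aux_eq_dirac_of_singleton μ hx1⟩
    · -- there is a set of intermediate measure: contradiction with extremality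
      exfalso
      push_neg at hzo
      obtain ⟨s, hs, hs0, hs1⟩ := hzo
      set p : ℝ≥0∞ := μ s with hp
      have hple : p ≤ 1 := prob_le_one
      have hpne : p ≠ ∞ := (lt_of_le_of_lt hple ENNReal.one_lt_top).ne
      have hplt : p < 1 := lt_of_le_of_ne hple hs1
      have hcompl : μ sᶜ = 1 - p := by
        rw [measure_compl hs (measure_ne_top μ s), measure_univ]
      have h1p0 : (1 : ℝ≥0∞) - p ≠ 0 := (tsub_pos_iff_lt.mpr hplt).ne'
      have h1pne : (1 : ℝ≥0∞) - p ≠ ∞ := by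
        exact (lt_of_le_of_lt tsub_le_self ENNReal.one_lt_top).ne
      set ν₁ : Measure X := p⁻¹ • μ.restrict s with hν₁
      set ν₂ : Measure X := ((1 : ℝ≥0∞) - p)⁻¹ • μ.restrict sᶜ with hν₂
      have hν₁prob : IsProbabilityMeasure ν₁ := by
        constructor
        rw [hν₁, Measure.smul_apply, Measure.restrict_apply_univ, smul_eq_mul, ← hp,
          ENNReal.inv_mul_cancel hs0 hpne]
      have hν₂prob : IsProbabilityMeasure ν₂ := by
        constructor
        rw [hν₂, Measure.smul_apply, Measure.restrict_apply_univ, smul_eq_mul, hcompl,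
          ENNReal.inv_mul_cancel h1p0 h1pne]
      have hres : ∀ A : Set X, (μ.restrict A).InnerRegular := by
        intro A
        exact ⟨Measure.InnerRegularWRT.restrict_of_measure_ne_top
          (fun u hu => hreg.innerRegular hu.1) (measure_ne_top μ A)⟩
      have hν₁reg : ν₁.InnerRegular := by
        rw [hν₁]
        exact ⟨(hres s).innerRegular.smul _⟩
      have hν₂reg : ν₂.InnerRegular := by
        rw [hν₂]
        exact ⟨(hres sᶜ).innerRegular.smul _⟩
      set t : ℝ≥0 := p.toNNReal with ht
      have hco : (t : ℝ≥0∞) = p := ENNReal.coe_toNNReal hpne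
      have ht0 : 0 < t := by
        rw [pos_iff_ne_zero]
        intro h
        apply hs0
        rw [← hco, h, ENNReal.coe_zero]
      have ht1 : t < 1 := by
        rw [← ENNReal.coe_lt_one_iff, hco]; exact hplt
      have hco1 : ((1 - t : ℝ≥0) : ℝ≥0∞) = 1 - p := by
        rw [ENNReal.coe_sub, hco, ENNReal.coe_one]
      have hdecomp : μ = t • ν₁ + (1 - t) • ν₂ := by
        rw [hν₁, hν₂, ENNReal.smul_def, ENNReal.smul_def, smul_smul, smul_smul, hco, hco1,
          ENNReal.mul_inv_cancel hs0 hpne, ENNReal.mul_inv_cancel h1p0 h1pne, one_smul,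
          one_smul, Measure.restrict_add_restrict_compl hs]
      have heq := hext ν₁ ν₂ ⟨hν₁prob, hν₁reg⟩ ⟨hν₂prob, hν₂reg⟩ t ht0 ht1 hdecomp
      have h1 : ν₁ s = 1 := by
        rw [hν₁, Measure.smul_apply, Measure.restrict_apply hs, Set.inter_self, smul_eq_mul,
          ← hp, ENNReal.inv_mul_cancel hs0 hpne]
      have h2 : ν₂ s = 0 := by
        rw [hν₂, Measure.smul_apply, Measure.restrict_apply hs, smul_eq_mul]
        simp
      rw [heq, h2] at h1
      exact one_ne_zero h1.symm
  · rintro ⟨x, rfl⟩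
    refine ⟨⟨inferInstance, aux_dirac_innerRegular x⟩, ?_⟩
    rintro ν₁ ν₂ ⟨hν₁prob, _⟩ ⟨hν₂prob, _⟩ t ht0 ht1 heq
    have hkey := congrArg (fun m : Measure X => m {x}ᶜ) heq
    simp only [Measure.add_apply, Measure.smul_apply, smul_eq_mul] at hkey
    rw [Measure.dirac_apply' _ (measurableSet_singleton x).compl,
      Set.indicator_of_notMem (by simp)] at hkey
    have hsum := hkey.symm
    rw [add_eq_zero] at hsum
    obtain ⟨ha, hb⟩ := hsum
    have hν₁0 : ν₁ {x}ᶜ = 0 := by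
      rw [ENNReal.smul_def, smul_eq_mul, mul_eq_zero] at ha
      rcases ha with h | h
      · exact absurd h (ENNReal.coe_ne_zero.mpr ht0.ne')
      · exact h
    have hν₂0 : ν₂ {x}ᶜ = 0 := by
      rw [ENNReal.smul_def, smul_eq_mul, mul_eq_zero] at hb
      rcases hb with h | h
      · exact absurd h (ENNReal.coe_ne_zero.mpr (tsub_pos_iff_lt.mpr ht1).ne')
      · exact h
    have h1 : ν₁ = Measure.dirac x := aux_eq_dirac_of_singleton ν₁
      ((prob_compl_eq_zero_iff (measurableSet_singleton x)).mp hν₁0)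
    have h2 : ν₂ = Measure.dirac x := aux_eq_dirac_of_singleton ν₂
      ((prob_compl_eq_zero_iff (measurableSet_singleton x)).mp hν₂0)
    rw [h1, h2]
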